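/- Let an admissible aggregation of the hourly data be given, and assume the core model attains its minimum. Then the core model attains its minimum at a point in which the generation variables x_{g,h} and the net-charge variables r_h depend only on the state Γ(h), and the storage level at the final hour of each block depends only on the block's state (i.e., all hours mapped to the same state carry identical dispatch decisions, and all blocks of the same state end at the same stored-energy level). -/

import Mathlib

/-- A point of the core (hourly) planning LP: generation `x`, generator
capacities `z`, storage power capacity `t`, storage energy capacity `u`,
net charge `r`, and storage levels `s`. -/
structure CorePoint (m n : ℕ) where
  x : Fin m → Fin n → ℝ
  z : Fin m → ℝ
  t : ℝ
  u : ℝ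
  r : Fin n → ℝ
  s : Fin n → ℝ

/-- Feasibility for the core model (hours cyclic, indices mod `n`). -/
def CoreFeasible {m n : ℕ} [NeZero n] (d : Fin n → ℝ) (a : Fin m → Fin n → ℝ)
    (p : CorePoint m n) : Prop :=
  (∀ g h, 0 ≤ p.x g h) ∧ (∀ g, 0 ≤ p.z g) ∧ 0 ≤ p.t ∧ 0 ≤ p.u ∧ (∀ h, 0 ≤ p.s h) ∧
  (∀ h, (∑ g, p.x g h) + p.r h = d h) ∧
  (∀ g h, p.x g h ≤ a g h * p.z g) ∧
  (∀ h, p.s h = p.s (h - 1) + p.r h) ∧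
  (∀ h, |p.r h| ≤ p.t) ∧
  (∀ h, p.s h ≤ p.u)

/-- Objective of the core model. -/
def CoreObj {m n : ℕ} (cx cz : Fin m → ℝ) (ct cu : ℝ) (p : CorePoint m n) : ℝ :=
  (∑ g, ∑ h, cx g * p.x g h) + (∑ g, cz g * p.z g) + ct * p.t + cu * p.u

/-- A point of the aggregated planning LP, with variables indexed by
states `Fin S` instead of hours. -/
structure AggPoint (m S : ℕ) where
  x : Fin m → Fin S → ℝ
  z : Fin m → ℝ
  t : ℝ
  u : ℝ
  r : Fin S → ℝ
  s : Fin S → ℝ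

/-- An admissible aggregation of the hourly data: a surjection `Γ` from
hours to states such that demand `d` and availability `a` depend only on
the state; the cyclic hour sequence decomposes into maximal runs
("blocks") of consecutive hours with constant state, every block of state
`σ` has the same length `q σ ≥ 1`, and every block of state `σ` is
immediately preceded by a block of state `prev σ` (each state has a unique
incoming connection; uniqueness of the outgoing connection follows).  The
block structure is encoded by `idx h`, the (1-based) position of hour `h`
within its block. -/
structure AdmissibleAgg (m n S : ℕ) [NeZero n] (d : Fin n → ℝ)
    (a : Fin m → Fin n → ℝ) where
  Γ : Fin n → Fin S
  q : Fin S → ℕ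
  prev : Fin S → Fin S
  idx : Fin n → ℕ
  surj : Function.Surjective Γ
  d_compat : ∀ h h', Γ h = Γ h' → d h = d h'
  a_compat : ∀ g h h', Γ h = Γ h' → a g h = a g h'
  q_pos : ∀ σ, 1 ≤ q σ
  idx_one_le : ∀ h, 1 ≤ idx h
  idx_le : ∀ h, idx h ≤ q (Γ h)
  idx_step : ∀ h, idx h < q (Γ h) → idx (h + 1) = idx h + 1 ∧ Γ (h + 1) = Γ h
  idx_end : ∀ h, idx h = q (Γ h) → idx (h + 1) = 1 ∧ Γ (h + 1) ≠ Γ h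
  pred_block : ∀ h, idx h = 1 → Γ (h - 1) = prev (Γ h)

/-- The weight of a state: the number of hours mapped to it. -/
def weight {n S : ℕ} (Γ : Fin n → Fin S) (σ : Fin S) : ℕ :=
  (Finset.univ.filter fun h => Γ h = σ).card

/-- Feasibility for the aggregated model (the aggregated demand `d σ` and
availability `a g σ` are the common values of `d h` and `a g h` over the
fiber `Γ⁻¹ σ`, expressed here fiberwise). -/
def AggFeasible {m n S : ℕ} [NeZero n] {d : Fin n → ℝ} {a : Fin m → Fin n → ℝ}
    (A : AdmissibleAgg m n S d a) (p : AggPoint m S) : Prop :=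
  (∀ g σ, 0 ≤ p.x g σ) ∧ (∀ g, 0 ≤ p.z g) ∧ 0 ≤ p.t ∧ 0 ≤ p.u ∧ (∀ σ, 0 ≤ p.s σ) ∧
  (∀ h, (∑ g, p.x g (A.Γ h)) + p.r (A.Γ h) = d h) ∧
  (∀ g h, p.x g (A.Γ h) ≤ a g h * p.z g) ∧
  (∀ σ, p.s σ = p.s (A.prev σ) + (A.q σ : ℝ) * p.r σ) ∧
  (∀ σ, |p.r σ| ≤ p.t) ∧
  (∀ σ, p.s σ ≤ p.u)

/-- Objective of the aggregated model, with weights `w σ = |Γ⁻¹ σ|`. -/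
def AggObj {m n S : ℕ} (Γ : Fin n → Fin S) (cx cz : Fin m → ℝ) (ct cu : ℝ)
    (p : AggPoint m S) : ℝ :=
  (∑ g, ∑ σ, (weight Γ σ : ℝ) * cx g * p.x g σ) + (∑ g, cz g * p.z g)
    + ct * p.t + cu * p.u

/-- The lifted hourly point of an aggregated point: `x g h := x̄ g (Γ h)`,
`r h := r̄ (Γ h)`, `z, t, u` unchanged, and for the `i`-th hour of a block
of state `σ`, `s h := s̄ (prev σ) + i * r̄ σ`. -/
def liftPoint {m n S : ℕ} [NeZero n] {d : Fin n → ℝ} {a : Fin m → Fin n → ℝ}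
    (A : AdmissibleAgg m n S d a) (p : AggPoint m S) : CorePoint m n where
  x := fun g h => p.x g (A.Γ h)
  z := p.z
  t := p.t
  u := p.u
  r := fun h => p.r (A.Γ h)
  s := fun h => p.s (A.prev (A.Γ h)) + (A.idx h : ℝ) * p.r (A.Γ h)

/-!
STATEMENT 10: Given an admissible aggregation, if the core model attains
its minimum, then it attains its minimum at a point in which the
generation variables `x g h` and net-charge variables `r h` depend only on
the state `Γ h`, and the storage level at the final hour of each block
depends only on the block's state.
-/

open scoped Fin.CommRing

lemma cast_pred {n : ℕ} [NeZero n] (k : ℕ) (hk : 1 ≤ k) :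
    ((k - 1 : ℕ) : Fin n) = (k : Fin n) - 1 := by
  have := Nat.cast_sub (R := Fin n) hk; simpa using this

namespace AdmissibleAgg

variable {m n S : ℕ} [NeZero n] {d : Fin n → ℝ} {a : Fin m → Fin n → ℝ}
  (A : AdmissibleAgg m n S d a)

/-- single backward step -/
lemma back_one (h : Fin n) (h2 : 2 ≤ A.idx h) :
    A.Γ (h - 1) = A.Γ h ∧ A.idx (h - 1) = A.idx h - 1 := by
  set h' := h - 1 with hh'
  have hsa : h' + 1 = h := sub_add_cancel h 1
  rcases lt_or_eq_of_le (A.idx_le h') with hlt | heq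
  · obtain ⟨h1, h2'⟩ := A.idx_step h' hlt
    rw [hsa] at h1 h2'
    exact ⟨h2'.symm ▸ rfl, by omega⟩
  · obtain ⟨h1, _⟩ := A.idx_end h' heq
    rw [hsa] at h1; omega

/-- backward iteration -/
lemma back_iter (h : Fin n) (k : ℕ) (hk : k < A.idx h) :
    A.Γ (h - (k : Fin n)) = A.Γ h ∧ A.idx (h - (k : Fin n)) = A.idx h - k := by
  induction k with
  | zero => simp
  | succ k ih =>
    have hk' : k < A.idx h := by omega
    obtain ⟨hΓ, hidx⟩ := ih hk'
    have h2 : 2 ≤ A.idx (h - (k : Fin n)) := by omega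
    obtain ⟨hΓ', hidx'⟩ := A.back_one _ h2
    have hcast : h - ((k + 1 : ℕ) : Fin n) = h - (k : Fin n) - 1 := by
      push_cast; ring
    rw [hcast]
    exact ⟨hΓ'.trans hΓ, by omega⟩

/-- forward iteration -/
lemma fwd_iter (h : Fin n) (k : ℕ) (hk : A.idx h + k ≤ A.q (A.Γ h)) :
    A.Γ (h + (k : Fin n)) = A.Γ h ∧ A.idx (h + (k : Fin n)) = A.idx h + k := by
  induction k with
  | zero => simp
  | succ k ih =>
    obtain ⟨hΓ, hidx⟩ := ih (by omega)
    have hlt : A.idx (h + (k : Fin n)) < A.q (A.Γ (h + (k : Fin n))) := by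
      rw [hΓ, hidx]; omega
    obtain ⟨h1, h2⟩ := A.idx_step _ hlt
    have hcast : h + ((k + 1 : ℕ) : Fin n) = h + (k : Fin n) + 1 := by
      push_cast; ring
    rw [hcast]
    exact ⟨h2.trans hΓ, by omega⟩

/-- the block end of hour h -/
def bend (h : Fin n) : Fin n := h + ((A.q (A.Γ h) - A.idx h : ℕ) : Fin n)

lemma bend_spec (h : Fin n) :
    A.Γ (A.bend h) = A.Γ h ∧ A.idx (A.bend h) = A.q (A.Γ h) := by
  have hle := A.idx_le h
  have h1 := A.idx_one_le h
  obtain ⟨hfw1, hfw2⟩ := A.fwd_iter h (A.q (A.Γ h) - A.idx h) (by omega)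
  exact ⟨hfw1, by simp only [bend]; omega⟩

lemma Γ_succ_of_end (h : Fin n) (he : A.idx h = A.q (A.Γ h)) :
    A.prev (A.Γ (h + 1)) = A.Γ h := by
  obtain ⟨h1, _⟩ := A.idx_end h he
  have := A.pred_block (h + 1) h1
  rw [add_sub_cancel_right] at this
  exact this.symm

lemma prev_bijective : Function.Bijective A.prev := by
  rw [← Finite.surjective_iff_bijective]
  intro σ
  obtain ⟨h, rfl⟩ := A.surj σ
  exact ⟨A.Γ (A.bend h + 1), by
    have hb := A.bend_spec h
    rw [A.Γ_succ_of_end (A.bend h) (by rw [hb.2, hb.1]), hb.1]⟩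

/-- fiber of a state -/
def fib (σ : Fin S) : Finset (Fin n) := Finset.univ.filter fun h => A.Γ h = σ

/-- block-end hours of a state -/
def ends (σ : Fin S) : Finset (Fin n) :=
  Finset.univ.filter fun h => A.Γ h = σ ∧ A.idx h = A.q σ

lemma mem_fib {σ : Fin S} {h : Fin n} : h ∈ A.fib σ ↔ A.Γ h = σ := by
  simp [fib]

lemma mem_ends {σ : Fin S} {h : Fin n} :
    h ∈ A.ends σ ↔ A.Γ h = σ ∧ A.idx h = A.q σ := by simp [ends]

/-- within-block membership: the key double-sum identity -/
lemma sum_fib (v : Fin n → ℝ) (σ : Fin S) :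
    ∑ h ∈ A.fib σ, v h = ∑ h ∈ A.ends σ, ∑ j ∈ Finset.range (A.q σ), v (h - (j : Fin n)) := by
  rw [← Finset.sum_product (A.ends σ) (Finset.range (A.q σ)) (fun p => v (p.1 - (p.2 : Fin n)))]
  refine Finset.sum_nbij' (fun h => (A.bend h, A.q σ - A.idx h))
    (fun p => p.1 - ((p.2 : ℕ) : Fin n)) ?_ ?_ ?_ ?_ ?_
  · intro h hh
    rw [A.mem_fib] at hh
    subst hh
    obtain ⟨hΓ, hidx⟩ := A.bend_spec h
    have h1 := A.idx_one_le h
    have hq := A.q_pos (A.Γ h)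
    rw [Finset.mem_product, A.mem_ends, Finset.mem_range]
    dsimp only
    exact ⟨⟨hΓ, by rw [hidx]⟩, by omega⟩
  · rintro ⟨h, j⟩ hp
    rw [Finset.mem_product, A.mem_ends, Finset.mem_range] at hp
    dsimp only at hp
    obtain ⟨⟨hΓ, hidx⟩, hj⟩ := hp
    have hbk := A.back_iter h j (by omega)
    rw [A.mem_fib]
    dsimp only
    rw [hbk.1, hΓ]
  · intro h hh
    rw [A.mem_fib] at hh
    subst hh
    dsimp only [bend]
    rw [add_sub_cancel_right]
  · rintro ⟨h, j⟩ hp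
    rw [Finset.mem_product, A.mem_ends, Finset.mem_range] at hp
    dsimp only at hp
    obtain ⟨⟨hΓ, hidx⟩, hj⟩ := hp
    obtain ⟨hΓ', hidx'⟩ := A.back_iter h j (by omega)
    dsimp only
    have hqeq : A.q σ - A.idx (h - (j : Fin n)) = j := by rw [hidx', hidx]; omega
    have hb : A.bend (h - (j : Fin n)) = h := by
      simp only [bend]
      rw [hΓ', hΓ, hidx', hidx]
      have hj2 : A.q σ - (A.q σ - j) = j := by omega
      rw [hj2, sub_add_cancel]
    exact Prod.ext hb hqeq
  · intro h hh
    rw [A.mem_fib] at hh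
    subst hh
    dsimp only [bend]
    rw [add_sub_cancel_right]

/-- bijection between ends of σ and ends of prev σ -/
lemma sum_ends_prev (v : Fin n → ℝ) (σ : Fin S) :
    ∑ h ∈ A.ends σ, v (h - ((A.q σ : ℕ) : Fin n)) = ∑ h ∈ A.ends (A.prev σ), v h := by
  refine Finset.sum_nbij' (fun h => h - ((A.q σ : ℕ) : Fin n))
    (fun h => h + ((A.q σ : ℕ) : Fin n)) ?_ ?_
    (fun h _ => sub_add_cancel h _) (fun h _ => add_sub_cancel_right h _) (fun h _ => rfl)
  · intro h hh
    rw [A.mem_ends] at hh ⊢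
    obtain ⟨hΓ, hidx⟩ := hh
    -- block start b = h - (q σ - 1), idx b = 1
    obtain ⟨hΓb, hidxb⟩ := A.back_iter h (A.q σ - 1) (by have := A.q_pos σ; omega)
    have hidxb1 : A.idx (h - ((A.q σ - 1 : ℕ) : Fin n)) = 1 := by
      rw [hidxb, hidx]; have := A.q_pos σ; omega
    have hpb := A.pred_block _ hidxb1
    have hcast : h - ((A.q σ - 1 : ℕ) : Fin n) - 1 = h - ((A.q σ : ℕ) : Fin n) := by
      rw [cast_pred _ (A.q_pos σ)]; ring
    rw [hcast, hΓb, hΓ] at hpb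
    -- hpb : A.Γ (h - q σ) = A.prev σ
    refine ⟨hpb, ?_⟩
    -- idx (h - qσ) must equal q (prev σ) : else step would contradict idx (block start) = 1
    set b' := h - ((A.q σ : ℕ) : Fin n) with hb'
    rcases lt_or_eq_of_le (A.idx_le b') with hlt | heq
    · obtain ⟨h1, _⟩ := A.idx_step b' hlt
      have hsucc : b' + 1 = h - ((A.q σ - 1 : ℕ) : Fin n) := by
        rw [hb']
        rw [cast_pred _ (A.q_pos σ)]; ring
      rw [hsucc, hidxb1] at h1
      have := A.idx_one_le b'
      omega
    · show A.idx b' = A.q (A.prev σ)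
      rw [heq, hpb]
  · intro h hh
    rw [A.mem_ends] at hh ⊢
    obtain ⟨hΓ, hidx⟩ := hh
    have he : A.idx h = A.q (A.Γ h) := by rw [hΓ, hidx]
    have hps := A.Γ_succ_of_end h he
    rw [hΓ] at hps
    have hΓ1 : A.Γ (h + 1) = σ := A.prev_bijective.injective hps
    obtain ⟨hidx1, _⟩ := A.idx_end h he
    obtain ⟨hΓf, hidxf⟩ := A.fwd_iter (h + 1) (A.q σ - 1)
      (by rw [hidx1, hΓ1]; have := A.q_pos σ; omega)
    have hcast : h + 1 + ((A.q σ - 1 : ℕ) : Fin n) = h + ((A.q σ : ℕ) : Fin n) := by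
      rw [cast_pred _ (A.q_pos σ)]; ring
    rw [hcast] at hΓf hidxf
    rw [hΓf, hΓ1, hidxf, hidx1]
    exact ⟨rfl, by have := A.q_pos σ; omega⟩

lemma fib_nonempty (σ : Fin S) : (A.fib σ).Nonempty := by
  obtain ⟨h, rfl⟩ := A.surj σ
  exact ⟨h, A.mem_fib.mpr rfl⟩

lemma ends_nonempty (σ : Fin S) : (A.ends σ).Nonempty := by
  obtain ⟨h, hh⟩ := A.fib_nonempty σ
  rw [A.mem_fib] at hh
  exact ⟨A.bend h, A.mem_ends.mpr ⟨(A.bend_spec h).1.trans hh,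
    by rw [(A.bend_spec h).2, hh]⟩⟩

lemma card_fib (σ : Fin S) : (A.fib σ).card = (A.ends σ).card * A.q σ := by
  have := A.sum_fib (fun _ => (1:ℝ)) σ
  simp only [Finset.sum_const, Finset.card_range, nsmul_eq_mul, mul_one] at this
  exact_mod_cast this

lemma card_ends_prev (σ : Fin S) : (A.ends σ).card = (A.ends (A.prev σ)).card := by
  have := A.sum_ends_prev (fun _ => (1:ℝ)) σ
  simp only [Finset.sum_const, nsmul_eq_mul, mul_one] at this
  exact_mod_cast this

lemma sum_comp_fib (v : Fin S → ℝ) :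
    ∑ h, v (A.Γ h) = ∑ σ, ((A.fib σ).card : ℝ) * v σ := by
  rw [← Finset.sum_fiberwise Finset.univ A.Γ (fun h => v (A.Γ h))]
  refine Finset.sum_congr rfl fun σ _ => ?_
  rw [show Finset.filter (fun i => A.Γ i = σ) Finset.univ = A.fib σ from rfl]
  rw [Finset.sum_congr rfl (fun h hh => by rw [A.mem_fib.mp hh] : ∀ h ∈ A.fib σ, v (A.Γ h) = v σ)]
  simp [mul_comm]

lemma sum_fib_total (f : Fin n → ℝ) : ∑ σ, ∑ h ∈ A.fib σ, f h = ∑ h, f h :=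
  Finset.sum_fiberwise Finset.univ A.Γ f


end AdmissibleAgg

lemma telescope_s {n : ℕ} [NeZero n] (s r : Fin n → ℝ)
    (hsr : ∀ h, s h = s (h - 1) + r h) (h : Fin n) (k : ℕ) :
    s h = s (h - (k : Fin n)) + ∑ j ∈ Finset.range k, r (h - (j : Fin n)) := by
  induction k with
  | zero => simp
  | succ k ih =>
    have hstep := hsr (h - (k : Fin n))
    have hcast : h - ((k + 1 : ℕ) : Fin n) = h - (k : Fin n) - 1 := by push_cast; ring
    rw [Finset.sum_range_succ, hcast, ih, hstep]; ring


theorem core_attains_min_at_symmetric_point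
    {m n S : ℕ} [NeZero n]
    (cx cz : Fin m → ℝ) (ct cu : ℝ)
    (d : Fin n → ℝ) (a : Fin m → Fin n → ℝ)
    (A : AdmissibleAgg m n S d a)
    (hmin : ∃ p : CorePoint m n, CoreFeasible d a p ∧
      ∀ p' : CorePoint m n, CoreFeasible d a p' →
        CoreObj cx cz ct cu p ≤ CoreObj cx cz ct cu p') :
    ∃ p : CorePoint m n, CoreFeasible d a p ∧
      (∀ p' : CorePoint m n, CoreFeasible d a p' →
        CoreObj cx cz ct cu p ≤ CoreObj cx cz ct cu p') ∧
      -- generation depends only on the state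
      (∀ g h h', A.Γ h = A.Γ h' → p.x g h = p.x g h') ∧
      -- net charge depends only on the state
      (∀ h h', A.Γ h = A.Γ h' → p.r h = p.r h') ∧
      -- the storage level at the final hour of a block depends only on the
      -- block's state
      (∀ h h', A.idx h = A.q (A.Γ h) → A.idx h' = A.q (A.Γ h') →
        A.Γ h = A.Γ h' → p.s h = p.s h') := by
  classical
  obtain ⟨p, hp, hopt⟩ := hmin
  obtain ⟨hx0, hz0, ht0, hu0, hs0, hdem, hcap, hsr, hrt, hsu⟩ := hp
  have hwpos : ∀ σ : Fin S, (0:ℝ) < ((A.fib σ).card : ℝ) := fun σ => by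
    exact_mod_cast Finset.card_pos.mpr (A.fib_nonempty σ)
  have hepos : ∀ σ : Fin S, (0:ℝ) < ((A.ends σ).card : ℝ) := fun σ => by
    exact_mod_cast Finset.card_pos.mpr (A.ends_nonempty σ)
  have hwne : ∀ σ : Fin S, ((A.fib σ).card : ℝ) ≠ 0 := fun σ => (hwpos σ).ne'
  have hene : ∀ σ : Fin S, ((A.ends σ).card : ℝ) ≠ 0 := fun σ => (hepos σ).ne'
  have hweq : ∀ σ : Fin S, ((A.fib σ).card : ℝ) = ((A.ends σ).card : ℝ) * (A.q σ : ℝ) :=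
    fun σ => by exact_mod_cast congrArg (Nat.cast : ℕ → ℝ) (A.card_fib σ)
  set w : Fin S → ℝ := fun σ => ((A.fib σ).card : ℝ) with hw
  set xb : Fin m → Fin S → ℝ := fun g σ => (∑ h ∈ A.fib σ, p.x g h) / w σ with hxb
  set rb : Fin S → ℝ := fun σ => (∑ h ∈ A.fib σ, p.r h) / w σ with hrb
  set sb : Fin S → ℝ := fun σ => (∑ h ∈ A.ends σ, p.s h) / ((A.ends σ).card : ℝ) with hsb
  have hfibΓ : ∀ (h h' : Fin n), h' ∈ A.fib (A.Γ h) → A.Γ h' = A.Γ h :=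
    fun h h' hh' => A.mem_fib.mp hh'
  -- nonnegativity
  have hxb0 : ∀ g σ, 0 ≤ xb g σ := fun g σ => by
    simp only [hxb]
    exact div_nonneg (Finset.sum_nonneg fun h _ => hx0 g h) (hwpos σ).le
  have hsb0 : ∀ σ, 0 ≤ sb σ := fun σ => by
    simp only [hsb]
    exact div_nonneg (Finset.sum_nonneg fun h _ => hs0 h) (hepos σ).le
  have hsbu : ∀ σ, sb σ ≤ p.u := fun σ => by
    simp only [hsb]
    rw [div_le_iff₀ (hepos σ)]
    calc ∑ h ∈ A.ends σ, p.s h ≤ ∑ h ∈ A.ends σ, p.u := Finset.sum_le_sum fun h _ => hsu h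
      _ = p.u * ((A.ends σ).card : ℝ) := by simp [mul_comm]
  -- demand
  have hdemb : ∀ h, (∑ g, xb g (A.Γ h)) + rb (A.Γ h) = d h := by
    intro h
    have h2 : ∑ h' ∈ A.fib (A.Γ h), ((∑ g, p.x g h') + p.r h') = w (A.Γ h) * d h := by
      rw [Finset.sum_congr rfl fun h' hh' => by
        rw [hdem h', A.d_compat h' h (hfibΓ h h' hh')]]
      simp [hw, mul_comm]
    have h3 : ∑ g, xb g (A.Γ h) = (∑ h' ∈ A.fib (A.Γ h), ∑ g, p.x g h') / w (A.Γ h) := by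
      simp only [hxb]
      rw [← Finset.sum_div, Finset.sum_comm]
    rw [h3, hrb, ← add_div, ← Finset.sum_add_distrib, h2,
      mul_div_cancel_left₀ _ (hwne (A.Γ h))]
  -- capacity
  have hcapb : ∀ g h, xb g (A.Γ h) ≤ a g h * p.z g := by
    intro g h
    simp only [hxb]
    rw [div_le_iff₀ (hwpos _)]
    calc ∑ h' ∈ A.fib (A.Γ h), p.x g h' ≤ ∑ h' ∈ A.fib (A.Γ h), a g h * p.z g :=
          Finset.sum_le_sum fun h' hh' => by
            rw [← A.a_compat g h' h (hfibΓ h h' hh')]; exact hcap g h'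
      _ = (a g h * p.z g) * w (A.Γ h) := by simp [hw, mul_comm]
  -- storage balance
  have hbal : ∀ σ, sb σ = sb (A.prev σ) + (A.q σ : ℝ) * rb σ := by
    intro σ
    have htel : ∑ h ∈ A.ends σ, p.s h
        = (∑ h ∈ A.ends σ, p.s (h - ((A.q σ : ℕ) : Fin n))) + ∑ h ∈ A.fib σ, p.r h := by
      rw [A.sum_fib p.r σ, ← Finset.sum_add_distrib]
      exact Finset.sum_congr rfl fun h _ => telescope_s p.s p.r hsr h (A.q σ)
    rw [A.sum_ends_prev p.s σ] at htel
    have hcard : ((A.ends (A.prev σ)).card : ℝ) = ((A.ends σ).card : ℝ) := by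
      exact_mod_cast congrArg (Nat.cast : ℕ → ℝ) (A.card_ends_prev σ).symm
    have hq0 : ((A.q σ : ℕ) : ℝ) ≠ 0 := Nat.cast_ne_zero.mpr (by have := A.q_pos σ; omega)
    simp only [hsb, hrb]
    rw [htel, add_div, hcard]
    congr 1
    simp only [hw]
    rw [hweq σ]
    rw [mul_div_assoc', mul_comm (((A.ends σ).card : ℝ)) ((A.q σ : ℝ)), mul_div_mul_left _ _ hq0]
  -- power bound
  have hrbt : ∀ σ, |rb σ| ≤ p.t := by
    intro σ
    simp only [hrb]
    rw [abs_div, abs_of_pos (hwpos σ), div_le_iff₀ (hwpos σ)]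
    calc |∑ h ∈ A.fib σ, p.r h| ≤ ∑ h ∈ A.fib σ, |p.r h| := Finset.abs_sum_le_sum_abs _ _
      _ ≤ ∑ h ∈ A.fib σ, p.t := Finset.sum_le_sum fun h _ => hrt h
      _ = p.t * w σ := by simp [hw, mul_comm]
  -- convexity bound for intermediate storage levels
  have hsmid : ∀ (σ : Fin S) (i : ℝ), 1 ≤ i → i ≤ (A.q σ : ℝ) →
      0 ≤ sb (A.prev σ) + i * rb σ ∧ sb (A.prev σ) + i * rb σ ≤ p.u := by
    intro σ i hi1 hiq
    have hb := hbal σ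
    rcases le_or_gt 0 (rb σ) with hr | hr
    · constructor
      · have h1 : 0 ≤ i * rb σ := mul_nonneg (by linarith) hr
        linarith [hsb0 (A.prev σ)]
      · have h1 : i * rb σ ≤ (A.q σ : ℝ) * rb σ := mul_le_mul_of_nonneg_right hiq hr
        linarith [hsbu σ]
    · constructor
      · have h1 : (A.q σ : ℝ) * rb σ ≤ i * rb σ := mul_le_mul_of_nonpos_right hiq hr.le
        linarith [hsb0 σ]
      · have h1 : i * rb σ ≤ 0 := mul_nonpos_iff.mpr (Or.inl ⟨by linarith, hr.le⟩)
        linarith [hsbu (A.prev σ)]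
  have hidx1R : ∀ h : Fin n, (1:ℝ) ≤ (A.idx h : ℝ) := fun h => by
    exact_mod_cast A.idx_one_le h
  have hidxqR : ∀ h : Fin n, (A.idx h : ℝ) ≤ (A.q (A.Γ h) : ℝ) := fun h => by
    exact_mod_cast A.idx_le h
  -- the lifted point
  set pL : CorePoint m n := ⟨fun g h => xb g (A.Γ h), p.z, p.t, p.u, fun h => rb (A.Γ h),
    fun h => sb (A.prev (A.Γ h)) + (A.idx h : ℝ) * rb (A.Γ h)⟩ with hpL
  have hpLfeas : CoreFeasible d a pL := by
    refine ⟨fun g h => hxb0 g (A.Γ h), hz0, ht0, hu0,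
      fun h => (hsmid (A.Γ h) (A.idx h) (hidx1R h) (hidxqR h)).1,
      hdemb, hcapb, ?_, fun h => hrbt (A.Γ h),
      fun h => (hsmid (A.Γ h) (A.idx h) (hidx1R h) (hidxqR h)).2⟩
    intro h
    show sb (A.prev (A.Γ h)) + (A.idx h : ℝ) * rb (A.Γ h)
      = (sb (A.prev (A.Γ (h-1))) + (A.idx (h-1) : ℝ) * rb (A.Γ (h-1))) + rb (A.Γ h)
    rcases eq_or_lt_of_le (A.idx_one_le h) with h1 | h2
    · -- idx h = 1
      have hpΓ := A.pred_block h h1.symm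
      have hidxp : A.idx (h - 1) = A.q (A.Γ (h - 1)) := by
        rcases lt_or_eq_of_le (A.idx_le (h - 1)) with hlt | heq
        · obtain ⟨hi, _⟩ := A.idx_step (h - 1) hlt
          rw [sub_add_cancel] at hi
          have := A.idx_one_le (h - 1)
          omega
        · exact heq
      have e1 : sb (A.prev (A.Γ (h-1))) + (A.idx (h-1) : ℝ) * rb (A.Γ (h-1))
          = sb (A.Γ (h-1)) := by
        rw [hbal (A.Γ (h-1)), hidxp]
      rw [e1, hpΓ, ← h1]
      push_cast
      ring
    · -- 2 ≤ idx h
      obtain ⟨hΓ1, hidx1⟩ := A.back_one h h2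
      rw [hΓ1, hidx1, Nat.cast_sub (A.idx_one_le h), Nat.cast_one]
      ring
  have hobj : CoreObj cx cz ct cu pL = CoreObj cx cz ct cu p := by
    have hx : ∀ g : Fin m, ∑ h, cx g * xb g (A.Γ h) = ∑ h, cx g * p.x g h := by
      intro g
      rw [A.sum_comp_fib (fun σ => cx g * xb g σ),
        ← A.sum_fib_total (fun h => cx g * p.x g h)]
      refine Finset.sum_congr rfl fun σ _ => ?_
      rw [← Finset.mul_sum]
      simp only [hxb, hw]
      rw [mul_comm (((A.fib σ).card : ℝ)) _, mul_assoc,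
        div_mul_cancel₀ _ (hwne σ)]
    unfold CoreObj
    simp only [hpL]
    congr 1
    congr 1
    congr 1
    exact Finset.sum_congr rfl fun g _ => hx g
  refine ⟨pL, hpLfeas, fun p' hp' => hobj ▸ hopt p' hp', ?_, ?_, ?_⟩
  · intro g h h' hΓ
    show xb g (A.Γ h) = xb g (A.Γ h')
    rw [hΓ]
  · intro h h' hΓ
    show rb (A.Γ h) = rb (A.Γ h')
    rw [hΓ]
  · intro h h' hqh hqh' hΓ
    show sb (A.prev (A.Γ h)) + (A.idx h : ℝ) * rb (A.Γ h)
      = sb (A.prev (A.Γ h')) + (A.idx h' : ℝ) * rb (A.Γ h')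
    rw [hqh, hqh', hΓ]
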